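/- For any group G, the commutator subgroup of the countable power G^ℕ consists precisely of those sequences (h_n) ∈ ∏_n [G,G] for which the commutator lengths of the h_n are bounded. -/

import Mathlib

open scoped commutatorElement

/-- The commutator length of `x`: the least `k` such that `x` is a product of `k`
commutators (junk value via `sInf` if `x` is not in the commutator subgroup). -/
noncomputable def commLength {G : Type} [Group G] (x : G) : ℕ :=
  sInf {k : ℕ | ∃ a b : Fin k → G, x = (List.ofFn (fun i => ⁅a i, b i⁆)).prod}

lemma aux_pad {G : Type} [Group G] (x : G) {k B : ℕ} (hkB : k ≤ B)
    (hx : ∃ a b : Fin k → G, x = (List.ofFn (fun i => ⁅a i, b i⁆)).prod) :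
    ∃ a b : Fin B → G, x = (List.ofFn (fun i => ⁅a i, b i⁆)).prod := by
  induction B, hkB using Nat.le_induction with
  | base => exact hx
  | succ B hB ih =>
    obtain ⟨a, b, hx⟩ := ih
    refine ⟨Fin.snoc a 1, Fin.snoc b 1, ?_⟩
    rw [List.ofFn_succ']
    simp [hx]

lemma aux_mem {G : Type} [Group G] (x : G) :
    x ∈ commutator G ↔ ∃ k, ∃ a b : Fin k → G,
      x = (List.ofFn (fun i => ⁅a i, b i⁆)).prod := by
  constructor
  · intro hx
    rw [commutator_eq_closure] at hx
    have hx' : x ∈ Submonoid.closure (commutatorSet G ∪ (commutatorSet G)⁻¹) := by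
      rwa [← Subgroup.mem_toSubmonoid, Subgroup.closure_toSubmonoid] at hx
    obtain ⟨l, hl, hprod⟩ := Submonoid.exists_list_of_mem_closure hx'
    have hl' : ∀ i : Fin l.length, ∃ a b : G, ⁅a, b⁆ = l.get i := by
      intro i
      rcases hl (l.get i) (l.get_mem i) with h | h
      · exact h
      · obtain ⟨a, b, hab⟩ := h
        exact ⟨b, a, by rw [← commutatorElement_inv, hab, inv_inv]⟩
    choose a b hab using hl'
    refine ⟨l.length, a, b, ?_⟩
    rw [← hprod]
    congr 1
    conv_lhs => rw [← List.ofFn_get l]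
    exact congrArg List.ofFn (funext fun i => (hab i).symm)
  · rintro ⟨k, a, b, rfl⟩
    apply Subgroup.list_prod_mem
    intro g hg
    simp only [List.mem_ofFn, Set.mem_range] at hg
    obtain ⟨i, rfl⟩ := hg
    exact Subgroup.commutator_mem_commutator (Subgroup.mem_top _) (Subgroup.mem_top _)

/-- The commutator subgroup of `G^ℕ` consists exactly of the sequences of elements of
`[G,G]` with bounded commutator lengths. -/
theorem stmt_10 (G : Type) [Group G] (h : ℕ → G) :
    h ∈ commutator (∀ _ : ℕ, G) ↔
      ((∀ n : ℕ, h n ∈ commutator G) ∧ ∃ B : ℕ, ∀ n : ℕ, commLength (h n) ≤ B) := by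
  constructor
  · intro hh
    obtain ⟨k, a, b, hk⟩ := (aux_mem h).mp hh
    have key : ∀ n, h n = (List.ofFn (fun i => ⁅a i n, b i n⁆)).prod := by
      intro n
      have := congrArg (Pi.evalMonoidHom (fun _ : ℕ => G) n) hk
      rw [map_list_prod, List.map_ofFn] at this
      exact this
    have hmem : ∀ n, k ∈ {m : ℕ | ∃ a b : Fin m → G,
        h n = (List.ofFn (fun i => ⁅a i, b i⁆)).prod} :=
      fun n => ⟨fun i => a i n, fun i => b i n, key n⟩
    refine ⟨fun n => (aux_mem (h n)).mpr ⟨k, hmem n⟩, k, fun n => Nat.sInf_le (hmem n)⟩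
  · rintro ⟨h1, B, hB⟩
    have h2 : ∀ n, ∃ a b : Fin B → G,
        h n = (List.ofFn (fun i => ⁅a i, b i⁆)).prod := by
      intro n
      obtain ⟨k, hk⟩ := (aux_mem (h n)).mp (h1 n)
      have hne : {m : ℕ | ∃ a b : Fin m → G,
          h n = (List.ofFn (fun i => ⁅a i, b i⁆)).prod}.Nonempty := ⟨k, hk⟩
      exact aux_pad (h n) (hB n) (Nat.sInf_mem hne)
    choose a b hab using h2
    apply (aux_mem h).mpr
    refine ⟨B, fun i n => a n i, fun i n => b n i, ?_⟩
    funext n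
    have : (List.ofFn (fun i : Fin B => ⁅fun m => a m i, fun m => b m i⁆)).prod n
        = (List.ofFn (fun i : Fin B => ⁅a n i, b n i⁆)).prod := by
      have := map_list_prod (Pi.evalMonoidHom (fun _ : ℕ => G) n)
        (List.ofFn (fun i : Fin B => ⁅fun m => a m i, fun m => b m i⁆))
      rw [List.map_ofFn] at this
      exact this
    rw [this]
    exact hab n
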